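/- Let h : (0,∞) → ℝ be concave, differentiable, with h(1) = 1, h'(1) = 1/2, and h(x) ≤ (x+1)/2 for all x > 0. If for some a > 1 one has h'(a) ≥ (h(a) − 1)/(a − 1), then h(x) = (x+1)/2 for all x in [1, a]. -/

import Mathlib

theorem stmt_16 (h : ℝ → ℝ)
    (hconc : ConcaveOn ℝ (Set.Ioi (0 : ℝ)) h)
    (hdiff : ∀ x ∈ Set.Ioi (0 : ℝ), DifferentiableAt ℝ h x)
    (h1 : h 1 = 1) (hd1 : deriv h 1 = 1/2)
    (hub : ∀ x : ℝ, 0 < x → h x ≤ (x + 1) / 2)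
    (a : ℝ) (ha : 1 < a)
    (hder : (h a - 1) / (a - 1) ≤ deriv h a) :
    ∀ x ∈ Set.Icc (1 : ℝ) a, h x = (x + 1) / 2 := by
  have m1 : (1 : ℝ) ∈ Set.Ioi (0 : ℝ) := by norm_num
  have ma : a ∈ Set.Ioi (0 : ℝ) := by simp only [Set.mem_Ioi]; linarith
  have ha1 : (0 : ℝ) < a - 1 := by linarith
  set s : ℝ := (h a - 1) / (a - 1) with hs
  have hha : h a = 1 + (a - 1) * s := by
    rw [hs]; field_simp; ring
  have hsl : slope h 1 a = s := by
    rw [slope_def_field, h1, hs]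
  have hda : deriv h a = s := le_antisymm
    (by simpa [hsl] using hconc.deriv_le_slope m1 ma ha (hdiff a ma))
    hder
  -- key: h is the chord on [1, a]
  have key : ∀ x ∈ Set.Icc (1 : ℝ) a, h x = 1 + (x - 1) * s := by
    intro x hx
    rcases eq_or_lt_of_le hx.1 with rfl | hx1
    · simp [h1]
    rcases eq_or_lt_of_le hx.2 with rfl | hx2
    · rw [hha]
    have mx : x ∈ Set.Ioi (0 : ℝ) := by simp only [Set.mem_Ioi]; linarith
    -- upper bound: slope(x,a) ≥ deriv h a = s
    have hA : h x ≤ 1 + (x - 1) * s := by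
      have hu := hconc.deriv_le_slope mx ma hx2 (hdiff a ma)
      rw [hda, slope_def_field, le_div_iff₀ (by linarith)] at hu
      nlinarith
    -- lower bound: concavity chord inequality
    have hB : 1 + (x - 1) * s ≤ h x := by
      have ht : (0 : ℝ) ≤ (a - x) / (a - 1) := div_nonneg (by linarith) ha1.le
      have hu' : (0 : ℝ) ≤ (x - 1) / (a - 1) := div_nonneg (by linarith) ha1.le
      have hsum : (a - x) / (a - 1) + (x - 1) / (a - 1) = 1 := by
        field_simp; ring
      have hcomb := hconc.2 m1 ma ht hu' hsum
      rw [smul_eq_mul, smul_eq_mul, smul_eq_mul, smul_eq_mul] at hcomb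
      have harg : (a - x) / (a - 1) * 1 + (x - 1) / (a - 1) * a = x := by
        field_simp; ring
      rw [harg, h1, mul_one] at hcomb
      have hmul := mul_le_mul_of_nonneg_right hcomb ha1.le
      have e : ((a - x) / (a - 1) + (x - 1) / (a - 1) * h a) * (a - 1)
          = (a - x) + (x - 1) * h a := by
        field_simp
      rw [e] at hmul
      nlinarith
    linarith
  -- show s = 1/2 using the derivative at 1
  have hs2 : s = 1 / 2 := by
    have hd1' : HasDerivAt h (deriv h 1) 1 := (hdiff 1 m1).hasDerivAt
    have htend := hasDerivAt_iff_tendsto_slope.1 hd1'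
    have htend' : Filter.Tendsto (slope h 1) (nhdsWithin 1 (Set.Ioi 1)) (nhds (deriv h 1)) :=
      htend.mono_left (nhdsWithin_mono 1 (fun y hy => ne_of_gt hy))
    have hev : ∀ᶠ y in nhdsWithin (1 : ℝ) (Set.Ioi 1), slope h 1 y = s := by
      filter_upwards [Ioo_mem_nhdsGT ha] with y hy
      have hy1 : y - 1 ≠ 0 := sub_ne_zero.2 (ne_of_gt hy.1)
      rw [slope_def_field, key y ⟨hy.1.le, hy.2.le⟩, h1]
      field_simp; ring
    have hconst : Filter.Tendsto (slope h 1) (nhdsWithin 1 (Set.Ioi 1)) (nhds s) :=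
      (tendsto_const_nhds : Filter.Tendsto (fun _ : ℝ => s) _ _).congr'
        (hev.mono fun y hy => hy.symm)
    have := tendsto_nhds_unique hconst htend'
    rw [hd1] at this; exact this
  intro x hx
  rw [key x hx, hs2]; ring
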